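/- Let L be a positive semidefinite linear functional on a unital commutative ℝ-algebra A with L(1)=1, suppose the function n ↦ L(aⁿ) satisfies |L(aⁿ)| ≤ cⁿ for all n ∈ ℕ₀ for some c ≥ 0, and fix m ∈ ℕ₀. Then |L(a^k · a^{2m})| ≤ c^k · L(a^{2m}) for all k ∈ ℕ₀. -/

import Mathlib

variable {A : Type*} [CommRing A] [Algebra ℝ A]

theorem stmt19 (L : A →ₗ[ℝ] ℝ) (hpsd : ∀ x : A, 0 ≤ L (x ^ 2)) (h1 : L 1 = 1)
    (a : A) (c : ℝ) (hc : 0 ≤ c) (hbd : ∀ n : ℕ, |L (a ^ n)| ≤ c ^ n) (m : ℕ) :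
    ∀ k : ℕ, |L (a ^ k * a ^ (2 * m))| ≤ c ^ k * L (a ^ (2 * m)) := by
  -- Cauchy–Schwarz for the positive functional L
  have CS : ∀ x y : A, (L (x * y))^2 ≤ L (x^2) * L (y^2) := by
    intro x y
    have hq : ∀ t : ℝ, 0 ≤ L (y^2) * (t * t) + (2 * L (x*y)) * t + L (x^2) := by
      intro t
      have h := hpsd (x + t • y)
      have e : (x + t • y)^2 = x^2 + (2*t) • (x*y) + (t*t) • (y^2) := by
        simp only [Algebra.smul_def, map_mul, map_ofNat]
        ring
      rw [e, map_add, map_add, map_smul, map_smul, smul_eq_mul, smul_eq_mul] at h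
      nlinarith [h]
    have hd := discrim_le_zero hq
    rw [discrim] at hd
    nlinarith [hd]
  set φ : ℕ → ℝ := fun j => L (a ^ j * a ^ (2 * m)) with hφ
  -- basic facts
  have hrw : ∀ j : ℕ, φ j = L (a ^ (j + 2 * m)) := by
    intro j; simp only [hφ, pow_add]
  have hφ0 : 0 ≤ φ 0 := by
    have : φ 0 = L ((a ^ m) ^ 2) := by
      simp only [hφ]; congr 1; ring
    rw [this]; exact hpsd _
  have hsq : ∀ j : ℕ, 0 ≤ φ (2 * j) := by
    intro j
    have : φ (2 * j) = L ((a ^ (j + m)) ^ 2) := by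
      simp only [hφ]; congr 1; ring
    rw [this]; exact hpsd _
  -- Cauchy–Schwarz step for φ
  have key : ∀ j : ℕ, (φ j) ^ 2 ≤ φ (2 * j) * φ 0 := by
    intro j
    have h := CS (a ^ j * a ^ m) (a ^ m)
    have e1 : (a ^ j * a ^ m) * a ^ m = a ^ j * a ^ (2 * m) := by ring
    have e2 : (a ^ j * a ^ m) ^ 2 = a ^ (2 * j) * a ^ (2 * m) := by ring
    have e3 : (a ^ m) ^ 2 = a ^ 0 * a ^ (2 * m) := by ring
    rw [e1, e2, e3] at h
    exact h
  -- exponential bound on φ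
  have hφbd : ∀ j : ℕ, |φ j| ≤ c ^ (j + 2 * m) := by
    intro j; rw [hrw]; exact hbd _
  -- iterated Cauchy–Schwarz
  have iter : ∀ (k : ℕ) (n : ℕ), |φ k| ^ (2 ^ n) ≤ |φ (2 ^ n * k)| * (φ 0) ^ (2 ^ n - 1) := by
    intro k n
    induction n with
    | zero => simp
    | succ n ih =>
      have h2n : 1 ≤ 2 ^ n := Nat.one_le_two_pow
      have habs : 0 ≤ |φ k| := abs_nonneg _
      have step1 : |φ k| ^ (2 ^ (n+1)) = (|φ k| ^ (2 ^ n)) ^ 2 := by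
        rw [pow_succ, pow_mul]
      have step2 : (|φ k| ^ (2 ^ n)) ^ 2 ≤ (|φ (2 ^ n * k)| * (φ 0) ^ (2 ^ n - 1)) ^ 2 := by
        apply pow_le_pow_left₀ (by positivity) ih
      have step3 : (|φ (2 ^ n * k)| * (φ 0) ^ (2 ^ n - 1)) ^ 2
          = (φ (2 ^ n * k)) ^ 2 * ((φ 0) ^ (2 ^ n - 1)) ^ 2 := by
        rw [mul_pow, sq_abs]
      have step4 : (φ (2 ^ n * k)) ^ 2 ≤ φ (2 * (2 ^ n * k)) * φ 0 := key _
      have e5 : 2 * (2 ^ n * k) = 2 ^ (n+1) * k := by ring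
      have step6 : (φ (2 ^ n * k)) ^ 2 ≤ |φ (2 ^ (n+1) * k)| * φ 0 := by
        rw [e5] at step4
        exact step4.trans (mul_le_mul_of_nonneg_right (le_abs_self _) hφ0)
      have e7 : ((φ 0) ^ (2 ^ n - 1)) ^ 2 = (φ 0) ^ (2 * (2 ^ n - 1)) := by
        rw [← pow_mul]; congr 1; ring
      have e8 : 2 ^ (n+1) - 1 = 2 * (2 ^ n - 1) + 1 := by
        have : 2 ^ (n+1) = 2 * 2 ^ n := by ring
        omega
      calc |φ k| ^ (2 ^ (n+1)) = (|φ k| ^ (2 ^ n)) ^ 2 := step1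
        _ ≤ (φ (2 ^ n * k)) ^ 2 * ((φ 0) ^ (2 ^ n - 1)) ^ 2 := step2.trans_eq step3
        _ ≤ (|φ (2 ^ (n+1) * k)| * φ 0) * (φ 0) ^ (2 * (2 ^ n - 1)) := by
            rw [e7]
            exact mul_le_mul_of_nonneg_right step6 (by positivity)
        _ = |φ (2 ^ (n+1) * k)| * (φ 0) ^ (2 ^ (n+1) - 1) := by
            rw [e8, pow_succ]; ring
  -- combine with exponential bound
  have main : ∀ (k : ℕ) (n : ℕ),
      |φ k| ^ (2 ^ n) ≤ c ^ (2 ^ n * k) * c ^ (2 * m) * (φ 0) ^ (2 ^ n - 1) := by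
    intro k n
    refine (iter k n).trans ?_
    rw [← pow_add]
    exact mul_le_mul_of_nonneg_right (hφbd _) (by positivity)
  -- conclude
  intro k
  suffices hgoal : |φ k| ≤ c ^ k * φ 0 by simpa [hφ] using hgoal
  by_contra hcon
  push_neg at hcon
  have hxpos : 0 < |φ k| := lt_of_le_of_lt (by positivity) hcon
  rcases eq_or_lt_of_le hφ0 with h0 | h0
  · -- φ 0 = 0 : contradiction from n = 1
    have h := main k 1
    rw [← h0] at h
    simp at h
    nlinarith [h, hxpos, sq_abs (φ k)]
  · -- φ 0 > 0
    rcases eq_or_lt_of_le hc with hc0 | hc0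
    · -- c = 0
      subst hc0
      rcases Nat.eq_zero_or_pos k with rfl | hk
      · have : |φ 0| = φ 0 := abs_of_nonneg hφ0
        simp [this] at hcon
      · have h := main k 1
        have : (0:ℝ) ^ (2 ^ 1 * k) = 0 := by
          apply zero_pow; positivity
        rw [this] at h
        simp at h
        nlinarith [h, hxpos, sq_abs (φ k)]
    · -- c > 0
      set B : ℝ := c ^ k * φ 0 with hB
      have hBpos : 0 < B := by positivity
      set r : ℝ := |φ k| / B with hr
      have hr1 : 1 < r := (one_lt_div hBpos).mpr hcon
      obtain ⟨n, hn⟩ := pow_unbounded_of_one_lt (c ^ (2 * m) / φ 0) hr1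
      have hn2 : c ^ (2 * m) / φ 0 < r ^ (2 ^ n) := by
        refine hn.trans_le ?_
        exact pow_le_pow_right₀ (le_of_lt hr1) n.lt_two_pow_self.le
      have hmain := main k n
      have hφk : |φ k| = r * B := by
        rw [hr]; field_simp
      have hBpow : B ^ (2 ^ n) = c ^ (2 ^ n * k) * (φ 0) ^ (2 ^ n) := by
        rw [hB, mul_pow, ← pow_mul, mul_comm k]
      have hφ0pow : (φ 0) ^ (2 ^ n) = (φ 0) ^ (2 ^ n - 1) * φ 0 := by
        rw [← pow_succ]; congr 1
        have : 1 ≤ 2 ^ n := Nat.one_le_two_pow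
        omega
      have hlt : c ^ (2 * m) * (φ 0) ^ (2 ^ n - 1) < r ^ (2 ^ n) * (φ 0) ^ (2 ^ n - 1) * φ 0 := by
        have h2 : c ^ (2 * m) < r ^ (2 ^ n) * φ 0 := by
          rw [div_lt_iff₀ h0] at hn2; linarith
        calc c ^ (2 * m) * (φ 0) ^ (2 ^ n - 1)
            < (r ^ (2 ^ n) * φ 0) * (φ 0) ^ (2 ^ n - 1) :=
              mul_lt_mul_of_pos_right h2 (by positivity)
          _ = r ^ (2 ^ n) * (φ 0) ^ (2 ^ n - 1) * φ 0 := by ring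
      have heq : |φ k| ^ (2 ^ n)
          = c ^ (2 ^ n * k) * (r ^ (2 ^ n) * (φ 0) ^ (2 ^ n - 1) * φ 0) := by
        rw [hφk, mul_pow, hBpow, hφ0pow]; ring
      have : |φ k| ^ (2 ^ n) > c ^ (2 ^ n * k) * c ^ (2 * m) * (φ 0) ^ (2 ^ n - 1) := by
        rw [heq]
        have hcpow : 0 < c ^ (2 ^ n * k) := by positivity
        calc c ^ (2 ^ n * k) * c ^ (2 * m) * (φ 0) ^ (2 ^ n - 1)
            = c ^ (2 ^ n * k) * (c ^ (2 * m) * (φ 0) ^ (2 ^ n - 1)) := by ring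
          _ < c ^ (2 ^ n * k) * (r ^ (2 ^ n) * (φ 0) ^ (2 ^ n - 1) * φ 0) :=
              mul_lt_mul_of_pos_left hlt hcpow
      linarith [hmain]
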